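/- For p ∈ (1,2] and x, y > 0 with x ≠ y, the divided difference (x^{p−1} − y^{p−1})/((p−1)(x−y)) is bounded below by (x + y)^{p−2} times the constant c_p = (sin((p−1)π)/π)∫₀^∞ 2 s^{p−2}/(1+2s) ds; that is, (x^{p−1} − y^{p−1})/((p−1)(x−y)) ≥ c_p (x + y)^{p−2}. -/

import Mathlib

open MeasureTheory

section Aux
open Set Real
lemma convexA {a : ℝ} (ha1 : a ≤ 1) : ConvexOn ℝ (Set.Ioi 0) (fun t : ℝ => t ^ (a - 1)) := by
  apply convexOn_of_hasDerivWithinAt2_nonneg (f' := fun t => (a-1)*t^(a-2))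
    (f'' := fun t => (a-1)*(a-2)*t^(a-3)) (convex_Ioi 0)
  · exact ContinuousOn.rpow_const continuousOn_id (fun t ht => Or.inl (ne_of_gt ht))
  · intro t ht
    rw [interior_Ioi] at ht ⊢
    have := Real.hasDerivAt_rpow_const (p := a - 1) (Or.inl (ne_of_gt ht))
    exact (this.hasDerivWithinAt.congr_deriv (by rw [show a - 2 = a - 1 - 1 by ring]) :
      HasDerivWithinAt (fun t : ℝ => t ^ (a-1)) ((a-1)*t^(a-2)) (Ioi 0) t)
  · intro t ht
    rw [interior_Ioi] at ht ⊢
    have := (Real.hasDerivAt_rpow_const (p := a - 2) (Or.inl (ne_of_gt ht))).const_mul (a-1)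
    exact (this.hasDerivWithinAt.congr_deriv (by rw [show a - 3 = a - 2 - 1 by ring]; ring) :
      HasDerivWithinAt (fun t : ℝ => (a-1)*t^(a-2)) ((a-1)*(a-2)*t^(a-3)) (Ioi 0) t)
  · intro t ht
    rw [interior_Ioi] at ht
    have h1 : 0 ≤ (a-1)*(a-2) := by nlinarith
    exact mul_nonneg h1 (Real.rpow_nonneg (le_of_lt ht) _)
lemma lemA {a x y : ℝ} (ha0 : 0 < a) (ha1 : a ≤ 1) (hy : 0 < y) (hxy : y < x) :
    a * (x - y) * ((x + y) / 2) ^ (a - 1) ≤ x ^ a - y ^ a := by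
  have hx : 0 < x := hy.trans hxy
  have hsub : Icc y x ⊆ Ioi (0:ℝ) := fun t ht => lt_of_lt_of_le hy ht.1
  have hconv : ConvexOn ℝ (Icc y x) (fun t : ℝ => t ^ (a - 1)) :=
    (convexA ha1).subset hsub (convex_Icc _ _)
  have hcont : ContinuousOn (fun t : ℝ => t ^ (a - 1)) (Icc y x) :=
    ContinuousOn.rpow_const continuousOn_id (fun t ht => Or.inl (ne_of_gt (hsub ht)))
  have h0 : volume (Icc y x) ≠ 0 := by
    rw [Real.volume_Icc]; simp [ENNReal.ofReal_eq_zero]; linarith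
  have htop : volume (Icc y x) ≠ ⊤ := by rw [Real.volume_Icc]; exact ENNReal.ofReal_ne_top
  have hfs : ∀ᵐ t ∂(volume.restrict (Icc y x)), id t ∈ Icc y x :=
    ae_restrict_mem measurableSet_Icc
  have hfi : IntegrableOn (id : ℝ → ℝ) (Icc y x) := continuous_id.integrableOn_Icc
  have hgi : IntegrableOn ((fun t : ℝ => t ^ (a - 1)) ∘ id) (Icc y x) :=
    hcont.integrableOn_Icc
  have hJ := hconv.map_set_average_le hcont isClosed_Icc h0 htop hfs hfi hgi
  -- compute the averages
  have hvol : (volume (Icc y x)).toReal = x - y := by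
    rw [Real.volume_Icc, ENNReal.toReal_ofReal (by linarith)]
  have hxy' : y ≤ x := hxy.le
  have havg1 : (⨍ t in Icc y x, id t) = (x + y) / 2 := by
    rw [setAverage_eq, measureReal_def, hvol]
    have : ∫ t in Icc y x, id t = ∫ t in y..x, t := by
      rw [intervalIntegral.integral_of_le hxy', integral_Icc_eq_integral_Ioc]
      rfl
    have hne : x - y ≠ 0 := sub_ne_zero.mpr (ne_of_gt hxy)
    rw [this, integral_id, smul_eq_mul]
    field_simp
    ring
  have havg2 : (⨍ t in Icc y x, t ^ (a-1)) = (x ^ a - y ^ a) / (a * (x - y)) := by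
    rw [setAverage_eq, measureReal_def, hvol]
    have : ∫ t in Icc y x, t ^ (a-1) = ∫ t in y..x, t ^ (a-1) := by
      rw [intervalIntegral.integral_of_le hxy', integral_Icc_eq_integral_Ioc]
    rw [this, integral_rpow (Or.inl (by linarith))]
    have ha : a - 1 + 1 = a := by ring
    rw [ha, smul_eq_mul]
    field_simp
  simp only [id_eq] at hJ
  simp only [id_eq] at havg1
  rw [havg1, havg2] at hJ
  have hd : 0 < a * (x - y) := mul_pos ha0 (sub_pos.mpr hxy)
  calc a * (x - y) * ((x + y) / 2) ^ (a - 1)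
      ≤ a * (x - y) * ((x ^ a - y ^ a) / (a * (x - y))) := by
        exact mul_le_mul_of_nonneg_left hJ hd.le
    _ = x ^ a - y ^ a := by field_simp [(sub_pos.mpr hxy).ne']
lemma betaReal {a : ℝ} (ha0 : 0 < a) (ha1 : a < 1) :
    ∫ t in (0:ℝ)..1, t ^ (a-1) * (1-t) ^ (-a) = π / Real.sin (π * a) := by
  have hs : 0 < Complex.re (a : ℂ) := by simpa using ha0
  have ht : 0 < Complex.re (1 - (a : ℂ)) := by simpa using ha1
  have h := Complex.Gamma_mul_Gamma_eq_betaIntegral hs ht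
  have hadd : (a : ℂ) + (1 - a) = 1 := by ring
  rw [hadd, Complex.Gamma_one, one_mul] at h
  have hbeta : Complex.betaIntegral a (1 - a)
      = ((∫ t in (0:ℝ)..1, t ^ (a-1) * (1-t) ^ (-a) : ℝ) : ℂ) := by
    rw [Complex.betaIntegral, ← intervalIntegral.integral_ofReal]
    apply intervalIntegral.integral_congr
    intro t ht'
    rw [uIcc_of_le (by norm_num : (0:ℝ) ≤ 1)] at ht'
    have h0t : (0:ℝ) ≤ t := ht'.1
    have ht1 : (0:ℝ) ≤ 1 - t := by linarith [ht'.2]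
    push_cast
    rw [Complex.ofReal_cpow h0t, Complex.ofReal_cpow ht1]
    push_cast
    ring_nf
  rw [hbeta] at h
  have hG : Complex.Gamma (a:ℂ) * Complex.Gamma (1 - (a:ℂ))
      = ((Real.Gamma a * Real.Gamma (1 - a) : ℝ) : ℂ) := by
    push_cast [← Complex.Gamma_ofReal]
    norm_num
  rw [hG] at h
  have := Complex.ofReal_inj.mp h
  rw [← this, Real.Gamma_mul_Gamma_one_sub]
lemma Jval {a : ℝ} (ha0 : 0 < a) (ha1 : a < 1) :
    ∫ s in Ioi (0:ℝ), s ^ (a-1) / (1+s) = π / Real.sin (π * a) := by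
  set f : ℝ → ℝ := fun t => t / (1-t) with hf
  have himg : f '' Ioo 0 1 = Ioi (0:ℝ) := by
    ext u
    constructor
    · rintro ⟨t, ⟨ht0, ht1⟩, rfl⟩
      have : 0 < 1 - t := by linarith
      exact div_pos ht0 this
    · intro hu
      have hu' : (0:ℝ) < u := hu
      refine ⟨u / (1+u), ⟨by positivity, ?_⟩, ?_⟩
      · rw [div_lt_one (by linarith)]; linarith
      · simp only [hf]
        have h1 : 1 - u/(1+u) = 1/(1+u) := by field_simp; ring
        rw [h1]
        field_simp
  have hderiv : ∀ t ∈ Ioo (0:ℝ) 1, HasDerivWithinAt f (1/(1-t)^2) (Ioo 0 1) t := by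
    intro t ht
    have h1 : 1 - t ≠ 0 := by have := ht.2; intro h; linarith [ht.2]; 
    have : HasDerivAt f ((1*(1-t) - t*(-1))/(1-t)^2) t :=
      (hasDerivAt_id t).div ((hasDerivAt_id t).const_sub 1) h1
    have h2 : (1*(1-t) - t*(-1))/(1-t)^2 = 1/(1-t)^2 := by ring_nf
    rw [h2] at this
    exact this.hasDerivWithinAt
  have hinj : InjOn f (Ioo 0 1) := by
    intro s hs t ht h
    have hs1 : 1 - s ≠ 0 := by intro h'; linarith [hs.2]
    have ht1 : 1 - t ≠ 0 := by intro h'; linarith [ht.2]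
    simp only [hf] at h
    field_simp at h
    linarith
  have hcov := integral_image_eq_integral_abs_deriv_smul measurableSet_Ioo hderiv hinj
    (fun s => s ^ (a-1) / (1+s))
  rw [himg] at hcov
  rw [hcov]
  have hpt : ∀ t ∈ Ioo (0:ℝ) 1,
      |1/(1-t)^2| • (f t ^ (a-1) / (1 + f t)) = t ^ (a-1) * (1-t) ^ (-a) := by
    intro t ht
    obtain ⟨ht0, ht1⟩ := ht
    have hb : (0:ℝ) < 1 - t := by linarith
    have hb' : (1:ℝ) - t ≠ 0 := hb.ne'
    have h1 : 1 + f t = 1/(1-t) := by simp only [hf]; field_simp; ring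
    have h2 : f t ^ (a-1) = t ^ (a-1) / (1-t) ^ (a-1) := Real.div_rpow ht0.le hb.le (a-1)
    have key : (1-t)^(-a) * (1-t)^(a-1) = ((1-t))⁻¹ := by
      rw [← Real.rpow_add hb, show -a + (a-1) = -1 by ring, Real.rpow_neg_one]
    have hne : (1-t)^(a-1) ≠ 0 := (Real.rpow_pos_of_pos hb _).ne'
    rw [smul_eq_mul, h1, h2, abs_of_pos (by positivity)]
    field_simp
    have hkey2 : (1-t)^(-a) * ((1-t)^2 * (1-t)^(a-1)) = 1 - t := by
      rw [show (1-t)^(-a)*((1-t)^2*(1-t)^(a-1)) = ((1-t)^(-a)*(1-t)^(a-1))*(1-t)^2 from by ring,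
        key, sq]
      field_simp
    rw [mul_assoc, mul_comm ((1-t)^(a-1)), key, mul_inv_cancel₀ hb']
  rw [setIntegral_congr_fun measurableSet_Ioo hpt]
  rw [← integral_Ioc_eq_integral_Ioo, ← intervalIntegral.integral_of_le (by norm_num : (0:ℝ) ≤ 1)]
  exact betaReal ha0 ha1

lemma Ival {p : ℝ} (hp1 : 1 < p) (hp2 : p < 2) :
    ∫ s in Set.Ioi (0:ℝ), 2 * s ^ (p-2) / (1 + 2*s)
      = 2 ^ (2-p) * (π / Real.sin (π * (p-1))) := by
  have hcomp := integral_comp_mul_left_Ioi (fun u => u^(p-2)/(1+u)) 0 (by norm_num : (0:ℝ) < 2)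
  rw [mul_zero] at hcomp
  have hpt : ∀ s ∈ Set.Ioi (0:ℝ),
      2 * s^(p-2) / (1 + 2*s) = 2^(3-p) * ((2*s)^(p-2)/(1+2*s)) := by
    intro s hs
    have hs' : (0:ℝ) < s := hs
    rw [Real.mul_rpow (by norm_num) hs'.le]
    have h2 : (2:ℝ)^(3-p) * 2^(p-2) = 2 := by
      rw [← Real.rpow_add (by norm_num : (0:ℝ) < 2)]
      norm_num
    field_simp
    rw [h2]
  rw [setIntegral_congr_fun measurableSet_Ioi hpt, integral_const_mul, hcomp, smul_eq_mul]
  have ha0 : 0 < p - 1 := by linarith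
  have ha1 : p - 1 < 1 := by linarith
  have := Jval ha0 ha1
  rw [show p - 1 - 1 = p - 2 from by ring] at this
  rw [this]
  have h3 : (2:ℝ)^(3-p) * 2⁻¹ = 2^(2-p) := by
    rw [← Real.rpow_neg_one 2, ← Real.rpow_add (by norm_num : (0:ℝ) < 2)]
    ring_nf
  rw [← mul_assoc, h3]

lemma main_ineq {p x y : ℝ} (hp1 : 1 < p) (hp2 : p ≤ 2) (hy : 0 < y) (hxy : y < x) :
    2^(2-p) * (x+y)^(p-2) ≤ (x ^ (p-1) - y ^ (p-1)) / ((p-1) * (x-y)) := by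
  have hx : 0 < x := hy.trans hxy
  have hd : 0 < (p-1) * (x-y) := mul_pos (by linarith) (by linarith)
  rw [le_div_iff₀ hd]
  have hmid : 2^(2-p) * (x+y)^(p-2) = ((x+y)/2)^(p-2) := by
    rw [Real.div_rpow (by linarith) (by norm_num : (0:ℝ) ≤ 2), div_eq_mul_inv,
      ← Real.rpow_neg (by norm_num : (0:ℝ) ≤ 2), show -(p-2) = 2-p from by ring, mul_comm]
  rw [hmid]
  have := lemA (a := p-1) (by linarith) (by linarith) hy hxy
  rw [show p - 1 - 1 = p - 2 from by ring] at this
  linarith [this]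


end Aux

theorem stmt18 (p x y : ℝ) (hp1 : 1 < p) (hp2 : p ≤ 2) (hx : 0 < x) (hy : 0 < y)
    (hxy : x ≠ y) :
    (Real.sin ((p - 1) * Real.pi) / Real.pi *
        ∫ s in Set.Ioi (0 : ℝ), 2 * s ^ (p - 2) / (1 + 2 * s)) * (x + y) ^ (p - 2) ≤
      (x ^ (p - 1) - y ^ (p - 1)) / ((p - 1) * (x - y)) := by
  rcases eq_or_lt_of_le hp2 with h2 | h2
  · subst h2
    have hsin : Real.sin ((2 - 1) * Real.pi) = 0 := by norm_num
    rw [hsin]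
    have hrhs : (x ^ ((2:ℝ) - 1) - y ^ ((2:ℝ) - 1)) / (((2:ℝ) - 1) * (x - y)) = 1 := by
      norm_num [Real.rpow_one]
      exact sub_ne_zero.mpr hxy
    rw [hrhs]
    norm_num
  · have hsin : 0 < Real.sin (Real.pi * (p - 1)) :=
      Real.sin_pos_of_pos_of_lt_pi (by nlinarith [Real.pi_pos]) (by nlinarith [Real.pi_pos])
    have hIv := Ival hp1 h2
    rw [show (p - 1) * Real.pi = Real.pi * (p - 1) from mul_comm _ _, hIv]
    have hconst : Real.sin (Real.pi * (p-1)) / Real.pi * (2 ^ (2-p) * (Real.pi / Real.sin (Real.pi * (p-1))))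
        = 2 ^ (2-p) := by
      field_simp
    rw [hconst]
    rcases hxy.lt_or_gt with h | h
    · -- x < y : swap
      have := main_ineq hp1 hp2 hx h
      rw [show (y:ℝ) + x = x + y from add_comm _ _] at this
      have heq : (y ^ (p-1) - x ^ (p-1)) / ((p-1) * (y-x))
          = (x ^ (p-1) - y ^ (p-1)) / ((p-1) * (x-y)) := by
        rw [show (p-1) * (y-x) = -((p-1)*(x-y)) from by ring,
          show y ^ (p-1) - x ^ (p-1) = -(x ^ (p-1) - y ^ (p-1)) from by ring, neg_div_neg_eq]
      rw [← heq]
      exact this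
    · exact main_ineq hp1 hp2 hy h
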